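/- For every index i with 1 ≤ i ≤ r, one has 0 ≤ x̄^h_{i−1+m} − x̄^h_{i−1−m} ≤ x_{(i−1+m)} − x_{(i−1−m)}; that is, the difference of the two block harmonic means is nonnegative and is bounded above by the corresponding difference of order statistics. -/

import Mathlib

open Finset

/-- The harmonic mean of the values of `x` over a finite index set `s`:
`card s / ∑_{j ∈ s} 1 / x j`. -/
noncomputable def hMean (x : ℤ → ℝ) (s : Finset ℤ) : ℝ :=
  (s.card : ℝ) / ∑ j ∈ s, (x j)⁻¹

/-- `x̄^h_{i-1+m}`: the harmonic mean of `x i, x (i+1), …, x (i-1+m)`. -/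
noncomputable def hUp (x : ℤ → ℝ) (m i : ℤ) : ℝ :=
  hMean x (Finset.Icc i (i - 1 + m))

/-- `x̄^h_{i-1-m}`: the harmonic mean of `x (i-1-m), x (i-m), …, x i`. -/
noncomputable def hDown (x : ℤ → ℝ) (m i : ℤ) : ℝ :=
  hMean x (Finset.Icc (i - 1 - m) i)

/-- Harmonic mean is at most the max of the values. -/
lemma hMean_le_of (x : ℤ → ℝ) (s : Finset ℤ) (hs : s.Nonempty) {c : ℝ} (hc : 0 < c)
    (hle : ∀ j ∈ s, x j ≤ c) (hpos : ∀ j ∈ s, 0 < x j) : hMean x s ≤ c := by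
  have hcard : (0:ℝ) < s.card := by exact_mod_cast hs.card_pos
  have hsum_ge : (s.card : ℝ) * c⁻¹ ≤ ∑ j ∈ s, (x j)⁻¹ := by
    calc (s.card : ℝ) * c⁻¹ = ∑ _j ∈ s, c⁻¹ := by rw [Finset.sum_const, nsmul_eq_mul]
    _ ≤ ∑ j ∈ s, (x j)⁻¹ :=
      Finset.sum_le_sum fun j hj => inv_anti₀ (hpos j hj) (hle j hj)
  have hpos_mul : (0:ℝ) < (s.card : ℝ) * c⁻¹ := mul_pos hcard (inv_pos.2 hc)
  have hS : (0:ℝ) < ∑ j ∈ s, (x j)⁻¹ := lt_of_lt_of_le hpos_mul hsum_ge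
  rw [hMean, div_le_iff₀ hS]
  calc (s.card:ℝ) = c * ((s.card:ℝ) * c⁻¹) := by field_simp
  _ ≤ c * ∑ j ∈ s, (x j)⁻¹ := mul_le_mul_of_nonneg_left hsum_ge hc.le

/-- Harmonic mean is at least the min of the values. -/
lemma le_hMean_of (x : ℤ → ℝ) (s : Finset ℤ) (hs : s.Nonempty) {a : ℝ} (ha : 0 < a)
    (hge : ∀ j ∈ s, a ≤ x j) (hpos : ∀ j ∈ s, 0 < x j) : a ≤ hMean x s := by
  have hcard : (0:ℝ) < s.card := by exact_mod_cast hs.card_pos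
  have hsum_le : ∑ j ∈ s, (x j)⁻¹ ≤ (s.card : ℝ) * a⁻¹ := by
    calc ∑ j ∈ s, (x j)⁻¹ ≤ ∑ _j ∈ s, a⁻¹ :=
        Finset.sum_le_sum fun j hj => inv_anti₀ ha (hge j hj)
    _ = (s.card : ℝ) * a⁻¹ := by rw [Finset.sum_const, nsmul_eq_mul]
  have hS : (0:ℝ) < ∑ j ∈ s, (x j)⁻¹ :=
    Finset.sum_pos (fun j hj => inv_pos.2 (hpos j hj)) hs
  rw [hMean, le_div_iff₀ hS]
  calc a * ∑ j ∈ s, (x j)⁻¹ ≤ a * ((s.card:ℝ) * a⁻¹) :=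
      mul_le_mul_of_nonneg_left hsum_le ha.le
  _ = (s.card:ℝ) := by field_simp

/-- for every `1 ≤ i ≤ r`,
`0 ≤ x̄^h_{i-1+m} − x̄^h_{i-1-m} ≤ x_(i-1+m) − x_(i-1-m)`. -/
theorem block_harmonic_means_difference_bounds
    (n r m : ℕ) (hn : 1 ≤ n) (hr : 1 ≤ r) (hrn : r ≤ n)
    (hm : 2 ≤ m) (hmr : 2 * m < r)
    (x : ℤ → ℝ)
    (hx_pos : ∀ j : ℤ, 1 ≤ j → j ≤ (r : ℤ) → 0 < x j)
    (hx_mono : ∀ j l : ℤ, 1 ≤ j → j < l → l ≤ (r : ℤ) → x j < x l)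
    (hx_low : ∀ j : ℤ, j < 1 → x j = x 1)
    (hx_high : ∀ j : ℤ, (r : ℤ) < j → x j = x r) :
    ∀ i : ℤ, 1 ≤ i → i ≤ (r : ℤ) →
      0 ≤ hUp x m i - hDown x m i ∧
      hUp x m i - hDown x m i ≤ x (i - 1 + m) - x (i - 1 - m) := by
  have hr' : (1:ℤ) ≤ (r:ℤ) := by exact_mod_cast hr
  -- positivity everywhere
  have pos : ∀ j : ℤ, 0 < x j := by
    intro j
    rcases lt_or_ge j 1 with hj | hj
    · rw [hx_low j hj]; exact hx_pos 1 le_rfl hr'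
    · rcases le_or_gt j (r:ℤ) with hjr | hjr
      · exact hx_pos j hj hjr
      · rw [hx_high j hjr]; exact hx_pos (r:ℤ) hr' le_rfl
  -- monotonicity on the range
  have mono_rng : ∀ j l : ℤ, 1 ≤ j → j ≤ l → l ≤ (r:ℤ) → x j ≤ x l := by
    intro j l hj hjl hlr
    rcases eq_or_lt_of_le hjl with h | h
    · rw [h]
    · exact (hx_mono j l hj h hlr).le
  -- global monotonicity
  have mono : ∀ j l : ℤ, j ≤ l → x j ≤ x l := by
    intro j l hjl
    rcases lt_or_ge j 1 with hj | hj
    · rw [hx_low j hj]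
      rcases lt_or_ge l 1 with hl | hl
      · rw [hx_low l hl]
      · rcases le_or_gt l (r:ℤ) with hlr | hlr
        · exact mono_rng 1 l le_rfl hl hlr
        · rw [hx_high l hlr]; exact mono_rng 1 (r:ℤ) le_rfl hr' le_rfl
    · rcases le_or_gt j (r:ℤ) with hjr | hjr
      · rcases le_or_gt l (r:ℤ) with hlr | hlr
        · exact mono_rng j l hj hjl hlr
        · rw [hx_high l hlr]; exact mono_rng j (r:ℤ) hj hjr le_rfl
      · rw [hx_high j hjr, hx_high l (hjr.trans_le hjl)]
  intro i hi hir
  have hm' : (2:ℤ) ≤ (m:ℤ) := by exact_mod_cast hm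
  -- the two index sets
  set sU := Finset.Icc i (i - 1 + (m:ℤ)) with hsU
  set sD := Finset.Icc (i - 1 - (m:ℤ)) i with hsD
  have hUne : sU.Nonempty := Finset.nonempty_Icc.2 (by omega)
  have hDne : sD.Nonempty := Finset.nonempty_Icc.2 (by omega)
  have hUposAll : ∀ j ∈ sU, 0 < x j := fun j _ => pos j
  have hDposAll : ∀ j ∈ sD, 0 < x j := fun j _ => pos j
  -- bounds for hUp
  have hUp_ge : x i ≤ hUp x (m:ℤ) i := by
    apply le_hMean_of x sU hUne (pos i) _ hUposAll
    intro j hj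
    exact mono i j (Finset.mem_Icc.1 hj).1
  have hUp_le : hUp x (m:ℤ) i ≤ x (i - 1 + (m:ℤ)) := by
    apply hMean_le_of x sU hUne (pos _) _ hUposAll
    intro j hj
    exact mono j (i - 1 + (m:ℤ)) (Finset.mem_Icc.1 hj).2
  -- bounds for hDown
  have hDown_le : hDown x (m:ℤ) i ≤ x i := by
    apply hMean_le_of x sD hDne (pos i) _ hDposAll
    intro j hj
    exact mono j i (Finset.mem_Icc.1 hj).2
  have hDown_ge : x (i - 1 - (m:ℤ)) ≤ hDown x (m:ℤ) i := by
    apply le_hMean_of x sD hDne (pos _) _ hDposAll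
    intro j hj
    exact mono (i - 1 - (m:ℤ)) j (Finset.mem_Icc.1 hj).1
  constructor
  · linarith
  · linarith
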